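/- Let h be a self-adjoint operator on L²(Q,μ), bounded below, with e^{-th} positivity preserving for all t > 0. If f ∈ Q(h) is real-valued then |f| ∈ Q(h) and (|f|, h|f|) ≤ (f, hf), where (·,h·) denotes the quadratic form. -/

import Mathlib

open MeasureTheory Filter Topology

/-- The semigroup `P t = e^{-t h}` of a self-adjoint operator `h` on `L²(Q,μ)` that is
bounded from below and whose semigroup is positivity preserving for all `t > 0`. -/
structure HeatSemigroup {Q : Type*} [MeasurableSpace Q] (μ : Measure Q) where
  P : ℝ → (Lp ℝ 2 μ →L[ℝ] Lp ℝ 2 μ)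
  selfAdj : ∀ t > 0, ∀ u v : Lp ℝ 2 μ, (inner ℝ (P t u) v : ℝ) = inner ℝ u (P t v)
  posPres : ∀ t > 0, ∀ u : Lp ℝ 2 μ, 0 ≤ u → 0 ≤ P t u
  semigroup : ∀ s > 0, ∀ t > 0, P (s + t) = (P s).comp (P t)
  /-- semiboundedness of `h` (i.e. `h ≥ -b`) at the semigroup level -/
  bddBelow : ∃ b : ℝ, ∀ t > 0, ‖P t‖ ≤ Real.exp (t * b)

namespace Stmt15Aux

variable {Q : Type*} [MeasurableSpace Q] {μ : Measure Q}

lemma inner_nn (u v : Lp ℝ 2 μ) (hu : 0 ≤ u) (hv : 0 ≤ v) :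
    (0:ℝ) ≤ inner ℝ u v := by
  rw [MeasureTheory.L2.inner_def]
  apply integral_nonneg_of_ae
  filter_upwards [(Lp.coeFn_nonneg u).2 hu, (Lp.coeFn_nonneg v).2 hv] with x hx hx'
  simpa [RCLike.inner_apply] using mul_nonneg hx' hx

/-- ψ(t) = ⟨u, P t u⟩ -/
noncomputable def psi (H : HeatSemigroup μ) (u : Lp ℝ 2 μ) (t : ℝ) : ℝ := inner ℝ u (H.P t u)

lemma P_split (H : HeatSemigroup μ) {s t : ℝ} (hs : 0 < s) (ht : 0 < t) (u : Lp ℝ 2 μ) :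
    H.P (s + t) u = H.P s (H.P t u) := by rw [H.semigroup s hs t ht]; rfl

lemma psi_eq_normsq (H : HeatSemigroup μ) (u : Lp ℝ 2 μ) {t : ℝ} (ht : 0 < t) :
    psi H u t = ‖H.P (t/2) u‖ ^ 2 := by
  have h2 : t/2 + t/2 = t := by ring
  have h : H.P t u = H.P (t/2) (H.P (t/2) u) := by
    rw [← P_split H (half_pos ht) (half_pos ht), h2]
  unfold psi
  rw [h, ← H.selfAdj (t/2) (half_pos ht) u (H.P (t/2) u), real_inner_self_eq_norm_sq]

lemma psi_nonneg (H : HeatSemigroup μ) (u : Lp ℝ 2 μ) {t : ℝ} (ht : 0 < t) :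
    0 ≤ psi H u t := by rw [psi_eq_normsq H u ht]; positivity

lemma norm_P_le (H : HeatSemigroup μ) {b : ℝ} (hb : ∀ t > 0, ‖H.P t‖ ≤ Real.exp (t * b))
    (u : Lp ℝ 2 μ) {t : ℝ} (ht : 0 < t) : ‖H.P t u‖ ≤ Real.exp (t * b) * ‖u‖ :=
  le_trans ((H.P t).le_opNorm u) (by
    have := hb t ht
    exact mul_le_mul_of_nonneg_right this (norm_nonneg u))

lemma psi_le (H : HeatSemigroup μ) {b : ℝ} (hb : ∀ t > 0, ‖H.P t‖ ≤ Real.exp (t * b))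
    (u : Lp ℝ 2 μ) {t : ℝ} (ht : 0 < t) : psi H u t ≤ Real.exp (t * b) * ‖u‖ ^ 2 := by
  have h1 : psi H u t ≤ ‖u‖ * ‖H.P t u‖ := real_inner_le_norm u (H.P t u)
  have h2 := norm_P_le H hb u ht
  calc psi H u t ≤ ‖u‖ * ‖H.P t u‖ := h1
    _ ≤ ‖u‖ * (Real.exp (t * b) * ‖u‖) := by
        exact mul_le_mul_of_nonneg_left h2 (norm_nonneg u)
    _ = Real.exp (t * b) * ‖u‖ ^ 2 := by ring

/-- p̃(t) = e^{-tb} ψ(t) -/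
noncomputable def pt (H : HeatSemigroup μ) (b : ℝ) (u : Lp ℝ 2 μ) (t : ℝ) : ℝ :=
  Real.exp (-(t * b)) * psi H u t

lemma pt_nonneg (H : HeatSemigroup μ) (b : ℝ) (u : Lp ℝ 2 μ) {t : ℝ} (ht : 0 < t) :
    0 ≤ pt H b u t := mul_nonneg (Real.exp_nonneg _) (psi_nonneg H u ht)

lemma pt_le_sq (H : HeatSemigroup μ) {b : ℝ} (hb : ∀ t > 0, ‖H.P t‖ ≤ Real.exp (t * b))
    (u : Lp ℝ 2 μ) {t : ℝ} (ht : 0 < t) : pt H b u t ≤ ‖u‖ ^ 2 := by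
  have := psi_le H hb u ht
  have h0 : (0:ℝ) < Real.exp (-(t*b)) := Real.exp_pos _
  calc pt H b u t ≤ Real.exp (-(t*b)) * (Real.exp (t * b) * ‖u‖ ^ 2) :=
        mul_le_mul_of_nonneg_left this h0.le
    _ = ‖u‖ ^ 2 := by rw [← mul_assoc, ← Real.exp_add]; simp

lemma pt_anti (H : HeatSemigroup μ) {b : ℝ} (hb : ∀ t > 0, ‖H.P t‖ ≤ Real.exp (t * b))
    (u : Lp ℝ 2 μ) {s t : ℝ} (hs : 0 < s) (hst : s < t) : pt H b u t ≤ pt H b u s := by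
  have hts : 0 < t - s := by linarith
  have hs2 : 0 < s/2 := half_pos hs
  have key : psi H u t ≤ Real.exp ((t-s) * b) * psi H u s := by
    have hsplit : H.P t u = H.P (s/2) (H.P (t-s) (H.P (s/2) u)) := by
      rw [← P_split H hts hs2, ← P_split H hs2 (by linarith : (0:ℝ) < t - s + s/2)]
      congr 1; ring
    have h2 : psi H u t = (inner ℝ (H.P (s/2) u) (H.P (t-s) (H.P (s/2) u)) : ℝ) := by
      unfold psi
      rw [hsplit, ← H.selfAdj (s/2) hs2]
    set v := H.P (s/2) u with hv
    have h3 : (inner ℝ v (H.P (t-s) v) : ℝ) ≤ ‖v‖ * ‖H.P (t-s) v‖ := real_inner_le_norm _ _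
    have h4 := norm_P_le H hb v hts
    have h5 : ‖v‖ ^ 2 = psi H u s := (psi_eq_normsq H u hs).symm
    calc psi H u t = (inner ℝ v (H.P (t-s) v) : ℝ) := h2
      _ ≤ ‖v‖ * ‖H.P (t-s) v‖ := h3
      _ ≤ ‖v‖ * (Real.exp ((t-s) * b) * ‖v‖) :=
          mul_le_mul_of_nonneg_left h4 (norm_nonneg v)
      _ = Real.exp ((t-s) * b) * ‖v‖ ^ 2 := by ring
      _ = Real.exp ((t-s) * b) * psi H u s := by rw [h5]
  unfold pt
  have h0 : (0:ℝ) < Real.exp (-(t*b)) := Real.exp_pos _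
  calc Real.exp (-(t*b)) * psi H u t
      ≤ Real.exp (-(t*b)) * (Real.exp ((t-s) * b) * psi H u s) :=
        mul_le_mul_of_nonneg_left key h0.le
    _ = Real.exp (-(s*b)) * psi H u s := by
        rw [← mul_assoc, ← Real.exp_add]; ring_nf

lemma pt_CS (H : HeatSemigroup μ) (b : ℝ) (u : Lp ℝ 2 μ) {s t : ℝ} (hs : 0 < s) (ht : 0 < t) :
    pt H b u (s + t) ^ 2 ≤ pt H b u (2*s) * pt H b u (2*t) := by
  have hPs : ‖H.P s u‖ ^ 2 = psi H u (2*s) := by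
    rw [psi_eq_normsq H u (by linarith : (0:ℝ) < 2*s)]
    norm_num
  have hPt : ‖H.P t u‖ ^ 2 = psi H u (2*t) := by
    rw [psi_eq_normsq H u (by linarith : (0:ℝ) < 2*t)]
    norm_num
  have h1 : psi H u (s + t) ≤ ‖H.P s u‖ * ‖H.P t u‖ := by
    have : psi H u (s+t) = (inner ℝ (H.P s u) (H.P t u) : ℝ) := by
      unfold psi
      rw [P_split H hs ht, ← H.selfAdj s hs]
    rw [this]; exact real_inner_le_norm _ _
  have h0 : 0 ≤ psi H u (s + t) := psi_nonneg H u (by linarith)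
  have h2 : psi H u (s+t) ^ 2 ≤ psi H u (2*s) * psi H u (2*t) := by
    calc psi H u (s+t) ^ 2 ≤ (‖H.P s u‖ * ‖H.P t u‖) ^ 2 := by
          apply pow_le_pow_left₀ h0 h1
      _ = psi H u (2*s) * psi H u (2*t) := by rw [mul_pow, hPs, hPt]
  unfold pt
  have he : Real.exp (-((s+t)*b)) ^ 2 = Real.exp (-(2*s*b)) * Real.exp (-(2*t*b)) := by
    rw [← Real.exp_add, ← Real.exp_nat_mul]
    · ring_nf
  calc (Real.exp (-((s+t)*b)) * psi H u (s+t)) ^ 2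
      = Real.exp (-((s+t)*b)) ^ 2 * psi H u (s+t) ^ 2 := by ring
    _ ≤ Real.exp (-((s+t)*b)) ^ 2 * (psi H u (2*s) * psi H u (2*t)) := by
        apply mul_le_mul_of_nonneg_left h2 (by positivity)
    _ = (Real.exp (-(2*s*b)) * psi H u (2*s)) * (Real.exp (-(2*t*b)) * psi H u (2*t)) := by
        rw [he]; ring


lemma amgm {x y z : ℝ} (hy2 : y^2 ≤ x*z) (hyx : y ≤ x) (hy0 : 0 ≤ y) (hz0 : 0 ≤ z) :
    2*y ≤ x + z := by
  rcases eq_or_lt_of_le (hy0.trans hyx) with h|h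
  · have hy : y = 0 := le_antisymm (h ▸ hyx) hy0
    have hx : x = 0 := h.symm
    linarith
  · nlinarith [sq_nonneg (x - y)]

-- convex antitone sequence slope lemma (abstract)
lemma seq_slope {A : ℕ → ℝ} (hmono : ∀ k, A (k+1) ≤ A k)
    (hconv : ∀ k, 2 * A (k+1) ≤ A k + A (k+2)) :
    ∀ p q : ℕ, q ≤ p → (q:ℝ) * (A 0 - A p) ≤ (p:ℝ) * (A 0 - A q) := by
  set d : ℕ → ℝ := fun k => A k - A (k+1) with hd
  have hdanti : Antitone d := by
    apply antitone_nat_of_succ_le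
    intro k
    have := hconv k
    simp only [hd]
    linarith
  have hsum : ∀ n, A 0 - A n = ∑ k ∈ Finset.range n, d k := by
    intro n
    rw [Finset.sum_range_sub' A n]
  intro p q hqp
  induction p, hqp using Nat.le_induction with
  | base => simp
  | succ p hqp ih =>
    have hstep : (q:ℝ) * d p ≤ A 0 - A q := by
      rw [hsum q]
      have h1 : ∀ k ∈ Finset.range q, d p ≤ d k := by
        intro k hk
        exact hdanti (le_of_lt (lt_of_lt_of_le (Finset.mem_range.1 hk) hqp))
      have := Finset.card_nsmul_le_sum (Finset.range q) d (d p) h1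
      simpa [nsmul_eq_mul] using this
    have hAp : A 0 - A (p+1) = (A 0 - A p) + d p := by simp only [hd]; ring
    have hq0 : (0:ℝ) ≤ A 0 - A q := by
      rw [hsum q]
      apply Finset.sum_nonneg
      intro k _
      simp only [hd]
      linarith [hmono k]
    push_cast
    rw [hAp]
    have : (q:ℝ) * ((A 0 - A p) + d p) = (q:ℝ) * (A 0 - A p) + (q:ℝ) * d p := by ring
    rw [this]
    calc (q:ℝ) * (A 0 - A p) + (q:ℝ) * d p ≤ (p:ℝ) * (A 0 - A q) + (A 0 - A q) := by
          apply add_le_add ?_ hstep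
          exact_mod_cast ih
      _ = ((p:ℝ) + 1) * (A 0 - A q) := by ring
noncomputable def dl (H : HeatSemigroup μ) (b : ℝ) (u : Lp ℝ 2 μ) (t : ℝ) : ℝ :=
  ‖u‖ ^ 2 - pt H b u t

lemma dl_nonneg (H : HeatSemigroup μ) {b : ℝ} (hb : ∀ t > 0, ‖H.P t‖ ≤ Real.exp (t * b))
    (u : Lp ℝ 2 μ) {t : ℝ} (ht : 0 < t) : 0 ≤ dl H b u t := by
  have := pt_le_sq H hb u ht; unfold dl; linarith

lemma dl_mono (H : HeatSemigroup μ) {b : ℝ} (hb : ∀ t > 0, ‖H.P t‖ ≤ Real.exp (t * b))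
    (u : Lp ℝ 2 μ) {s t : ℝ} (hs : 0 < s) (hst : s ≤ t) : dl H b u s ≤ dl H b u t := by
  rcases eq_or_lt_of_le hst with h|h
  · rw [h]
  · have := pt_anti H hb u hs h; unfold dl; linarith

lemma dl_scale (H : HeatSemigroup μ) {b : ℝ} (hb : ∀ t > 0, ‖H.P t‖ ≤ Real.exp (t * b))
    (u : Lp ℝ 2 μ) {r : ℝ} (hr : 0 < r) {p q : ℕ} (hq : 1 ≤ q) (hqp : q ≤ p) :
    (q:ℝ) * dl H b u (p * r) ≤ (p:ℝ) * dl H b u (q * r) := by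
  set A : ℕ → ℝ := fun k => if k = 0 then ‖u‖ ^ 2 else pt H b u (k * r) with hA
  have hA0 : A 0 = ‖u‖ ^ 2 := by simp [hA]
  have hApos : ∀ k : ℕ, 1 ≤ k → A k = pt H b u (k * r) := by
    intro k hk
    have hk0 : k ≠ 0 := by omega
    simp [hA, hk0]
  have hcast : ∀ k : ℕ, 1 ≤ k → (0:ℝ) < (k:ℝ) * r := by
    intro k hk
    have : (1:ℝ) ≤ (k:ℝ) := by exact_mod_cast hk
    nlinarith
  have hexpsq : ∀ x : ℝ, Real.exp x ^ 2 = Real.exp (2*x) := by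
    intro x; rw [sq, ← Real.exp_add]; congr 1; ring
  have hmono : ∀ k, A (k+1) ≤ A k := by
    intro k
    match k with
    | 0 =>
      rw [hApos 1 le_rfl, hA0]
      have e : ((1:ℕ):ℝ) * r = r := by norm_num
      rw [e]
      exact pt_le_sq H hb u hr
    | (k+1) =>
      rw [hApos (k+2) (by omega), hApos (k+1) (by omega)]
      apply pt_anti H hb u (hcast (k+1) (by omega))
      have hk0 : (0:ℝ) ≤ (k:ℝ) := Nat.cast_nonneg k
      push_cast
      nlinarith
  have hA_nonneg : ∀ k, 0 ≤ A k := by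
    intro k
    match k with
    | 0 => rw [hA0]; positivity
    | (k+1) => rw [hApos (k+1) (by omega)]; exact pt_nonneg H b u (hcast (k+1) (by omega))
  have hlogconv : ∀ k, A (k+1) ^ 2 ≤ A k * A (k+2) := by
    intro k
    match k with
    | 0 =>
      rw [hApos 1 le_rfl, hApos 2 (by omega), hA0]
      have e1 : ((1:ℕ):ℝ) * r = r := by norm_num
      have e2 : ((2:ℕ):ℝ) * r = 2 * r := by norm_num
      rw [e1, e2]
      have hPr : ‖H.P r u‖ ^ 2 = psi H u (2*r) := by
        rw [psi_eq_normsq H u (by linarith : (0:ℝ) < 2*r)]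
        norm_num
      have h1 : psi H u r ≤ ‖u‖ * ‖H.P r u‖ := real_inner_le_norm _ _
      have h0 : 0 ≤ psi H u r := psi_nonneg H u hr
      have h2 : psi H u r ^ 2 ≤ ‖u‖ ^ 2 * psi H u (2*r) := by
        calc psi H u r ^ 2 ≤ (‖u‖ * ‖H.P r u‖) ^ 2 := pow_le_pow_left₀ h0 h1 2
          _ = ‖u‖ ^ 2 * psi H u (2*r) := by rw [mul_pow, hPr]
      unfold pt
      have hkey : Real.exp (-(r*b)) ^ 2 = Real.exp (-(2*r*b)) := by
        rw [hexpsq]; congr 1; ring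
      calc (Real.exp (-(r*b)) * psi H u r) ^ 2
          = Real.exp (-(2*r*b)) * psi H u r ^ 2 := by rw [← hkey]; ring
        _ ≤ Real.exp (-(2*r*b)) * (‖u‖ ^ 2 * psi H u (2*r)) :=
            mul_le_mul_of_nonneg_left h2 (Real.exp_pos _).le
        _ = ‖u‖ ^ 2 * (Real.exp (-(2*r*b)) * psi H u (2*r)) := by ring
    | (k+1) =>
      rw [hApos (k+2) (by omega), hApos (k+1) (by omega), hApos (k+3) (by omega)]
      have hk0 : (0:ℝ) ≤ (k:ℝ) := Nat.cast_nonneg k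
      have hcs := pt_CS H b u (s := ((k:ℝ)+1)*r/2) (t := ((k:ℝ)+3)*r/2)
        (by nlinarith) (by nlinarith)
      have e1 : ((k:ℝ)+1)*r/2 + ((k:ℝ)+3)*r/2 = ((k+2:ℕ):ℝ) * r := by push_cast; ring
      have e2 : 2 * (((k:ℝ)+1)*r/2) = ((k+1:ℕ):ℝ) * r := by push_cast; ring
      have e3 : 2 * (((k:ℝ)+3)*r/2) = ((k+3:ℕ):ℝ) * r := by push_cast; ring
      rw [e1, e2, e3] at hcs
      exact hcs
  have hconv : ∀ k, 2 * A (k+1) ≤ A k + A (k+2) := by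
    intro k
    exact amgm (hlogconv k) (hmono k) (hA_nonneg (k+1)) (hA_nonneg (k+2))
  have hslope := seq_slope hmono hconv p q hqp
  rw [hA0, hApos p (le_trans hq hqp), hApos q hq] at hslope
  unfold dl
  exact hslope

set_option maxHeartbeats 1000000 in
lemma G_anti (H : HeatSemigroup μ) {b : ℝ} (hb : ∀ t > 0, ‖H.P t‖ ≤ Real.exp (t * b))
    (u : Lp ℝ 2 μ) {s t : ℝ} (hs : 0 < s) (hst : s < t) :
    dl H b u t / t ≤ dl H b u s / s := by
  have ht : 0 < t := hs.trans hst
  rw [div_le_div_iff₀ ht hs]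
  apply le_of_forall_pos_le_add
  intro ε hε
  -- choose N
  obtain ⟨N, hN⟩ := exists_nat_gt (max 1 (s * dl H b u s / ε))
  have hN1 : (1:ℝ) < (N:ℝ) := lt_of_le_of_lt (le_max_left _ _) hN
  have hN0 : (0:ℝ) < (N:ℝ) := by linarith
  have hNnat : 1 ≤ N := by exact_mod_cast hN1.le
  have hNd : s * dl H b u s / ε < (N:ℝ) := lt_of_le_of_lt (le_max_right _ _) hN
  have hNd' : s * dl H b u s < ε * (N:ℝ) := by
    rw [div_lt_iff₀ hε] at hNd; linarith [hNd]
  set r : ℝ := s / N with hrdef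
  have hr : 0 < r := div_pos hs hN0
  set p : ℕ := ⌈(N:ℝ) * t / s⌉₊ with hpdef
  have hqr : (N:ℝ) * r = s := by
    rw [hrdef]; field_simp
  have hts : (N:ℝ) ≤ (N:ℝ) * t / s := by
    rw [le_div_iff₀ hs]
    nlinarith
  have hqp : N ≤ p := by
    have h1 : ((N:ℝ)) ≤ (p:ℝ) := le_trans hts (Nat.le_ceil _)
    exact_mod_cast h1
  have hpr_ge : t ≤ (p:ℝ) * r := by
    have h1 : (N:ℝ) * t / s ≤ (p:ℝ) := Nat.le_ceil _
    rw [hrdef]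
    rw [div_le_iff₀ hs] at h1
    have h2 : (p:ℝ) * (s / N) = (p:ℝ) * s / N := by ring
    rw [h2, le_div_iff₀ hN0]
    nlinarith
  have hpr_le : (p:ℝ) ≤ (N:ℝ) * t / s + 1 := by
    have : (0:ℝ) ≤ (N:ℝ) * t / s := le_trans hN0.le hts
    exact le_of_lt (Nat.ceil_lt_add_one this)
  -- main chain
  have h1 : dl H b u t ≤ dl H b u ((p:ℝ) * r) := dl_mono H hb u ht hpr_ge
  have h2 : (N:ℝ) * dl H b u ((p:ℝ) * r) ≤ (p:ℝ) * dl H b u ((N:ℝ) * r) :=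
    dl_scale H hb u hr hNnat hqp
  rw [hqr] at h2
  have hds : 0 ≤ dl H b u s := dl_nonneg H hb u hs
  have hdpr : 0 ≤ dl H b u ((p:ℝ) * r) := dl_nonneg H hb u (lt_of_lt_of_le ht hpr_ge)
  -- N * (dl t * s) ≤ N * (dl (p r) * s) ≤ p * dl s * s ≤ (N t/s + 1) * dl s * s
  --   = N * t * dl s + s * dl s < N * t * dl s + ε N
  have key : (N:ℝ) * (dl H b u t * s) ≤ (N:ℝ) * (dl H b u s * t + ε) := by
    have c1 : (N:ℝ) * (dl H b u t * s) ≤ (N:ℝ) * dl H b u ((p:ℝ) * r) * s := by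
      have := mul_le_mul_of_nonneg_left h1 hN0.le
      nlinarith
    have c2 : (N:ℝ) * dl H b u ((p:ℝ) * r) * s ≤ (p:ℝ) * dl H b u s * s := by
      nlinarith
    have c3 : (p:ℝ) * dl H b u s * s ≤ ((N:ℝ) * t / s + 1) * dl H b u s * s := by
      have hnn : 0 ≤ dl H b u s * s := mul_nonneg hds hs.le
      nlinarith [mul_le_mul_of_nonneg_right hpr_le hnn]
    have c4 : ((N:ℝ) * t / s + 1) * dl H b u s * s = (N:ℝ) * (t * dl H b u s) + s * dl H b u s := by
      field_simp
    have c5 : (N:ℝ) * (t * dl H b u s) + s * dl H b u s < (N:ℝ) * (t * dl H b u s) + ε * N := by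
      linarith
    linarith [c1, c2, c3, c5, c4.le, c4.ge]
  have := le_of_mul_le_mul_left key hN0
  linarith
lemma psi_abs_le (H : HeatSemigroup μ) (f : Lp ℝ 2 μ) {t : ℝ} (ht : 0 < t) :
    psi H f t ≤ psi H |f| t := by
  have main : ∀ a c : Lp ℝ 2 μ, 0 ≤ a → 0 ≤ c →
      (inner ℝ (a - c) (H.P t (a - c)) : ℝ) ≤ inner ℝ (a + c) (H.P t (a + c)) := by
    intro a c ha hc
    have h1 : (0:ℝ) ≤ inner ℝ a (H.P t c) := inner_nn _ _ ha (H.posPres t ht _ hc)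
    have h2 : (0:ℝ) ≤ inner ℝ c (H.P t a) := inner_nn _ _ hc (H.posPres t ht _ ha)
    rw [map_sub, map_add, inner_sub_left, inner_add_left, inner_sub_right, inner_sub_right,
      inner_add_right, inner_add_right]
    linarith
  have hdecomp : f⁺ - f⁻ = f := posPart_sub_negPart f
  have habs : f⁺ + f⁻ = |f| := posPart_add_negPart f
  have := main f⁺ f⁻ (posPart_nonneg f) (negPart_nonneg f)
  rw [hdecomp, habs] at this
  unfold psi
  exact this

end Stmt15Aux

open Stmt15Aux

/-- Form-domain version of Lemma 2: for a semibounded self-adjoint `h` on a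
real `L²`-space with positivity-preserving semigroup, if `f ∈ Q(h)` (membership and the
form value `qf` encoded by convergence of `t⁻¹⟨f,(1-e^{-th})f⟩` as `t → 0⁺`), then
`|f| ∈ Q(h)` and `(|f|, h |f|) ≤ (f, h f)`. -/
theorem stmt15 {Q : Type*} [MeasurableSpace Q] (μ : Measure Q) [SigmaFinite μ]
    (H : HeatSemigroup μ) (f : Lp ℝ 2 μ) (qf : ℝ)
    (hf : Tendsto (fun t : ℝ => (inner ℝ f (f - H.P t f) : ℝ) / t)
      (nhdsWithin 0 (Set.Ioi 0)) (nhds qf)) :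
    ∃ q : ℝ,
      Tendsto (fun t : ℝ => (inner ℝ |f| (|f| - H.P t |f|) : ℝ) / t)
        (nhdsWithin 0 (Set.Ioi 0)) (nhds q) ∧
      q ≤ qf := by
  obtain ⟨b, hb⟩ := H.bddBelow
  set g : Lp ℝ 2 μ := |f| with hg
  have hnorm : ‖g‖ = ‖f‖ := norm_abs_eq_norm f
  have hFf : ∀ t : ℝ, (inner ℝ f (f - H.P t f) : ℝ) = ‖f‖^2 - psi H f t := by
    intro t
    rw [inner_sub_right, real_inner_self_eq_norm_sq]; rfl
  have hFg : ∀ t : ℝ, (inner ℝ g (g - H.P t g) : ℝ) = ‖g‖^2 - psi H g t := by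
    intro t
    rw [inner_sub_right, real_inner_self_eq_norm_sq]; rfl
  have htend0 : Tendsto (fun t : ℝ => t) (𝓝[>] (0:ℝ)) (𝓝 0) :=
    (continuous_id.tendsto 0).mono_left nhdsWithin_le_nhds
  have hmem : ∀ᶠ t in 𝓝[>] (0:ℝ), 0 < t := by
    filter_upwards [self_mem_nhdsWithin] with t ht using ht
  -- ψ_f → ‖f‖²
  have hpsif : Tendsto (fun t => psi H f t) (𝓝[>] (0:ℝ)) (𝓝 (‖f‖^2)) := by
    have h1 : Tendsto (fun t : ℝ => t * ((inner ℝ f (f - H.P t f) : ℝ)/t)) (𝓝[>] 0)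
        (𝓝 (0 * qf)) := htend0.mul hf
    rw [zero_mul] at h1
    have h2 : Tendsto (fun t => ‖f‖^2 - psi H f t) (𝓝[>] 0) (𝓝 0) := by
      apply Filter.Tendsto.congr' _ h1
      filter_upwards [hmem] with t ht
      rw [mul_div_cancel₀ _ (ne_of_gt ht), hFf t]
    have h3 := tendsto_const_nhds (x := ‖f‖^2) (f := 𝓝[>] (0:ℝ)) |>.sub h2
    rw [sub_zero] at h3
    apply Filter.Tendsto.congr' _ h3
    filter_upwards with t; ring
  -- exp slope → b
  have hexp : Tendsto (fun t : ℝ => (1 - Real.exp (-(t*b)))/t) (𝓝[>] 0) (𝓝 b) := by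
    have hd : HasDerivAt (fun t : ℝ => 1 - Real.exp (-(t*b))) b 0 := by
      have h1 : HasDerivAt (fun t : ℝ => -(t*b)) (-b) 0 := by
        have := ((hasDerivAt_id' (x := (0:ℝ))).mul_const b).neg; rw [one_mul] at this; exact this
      have := (hasDerivAt_const (0:ℝ) (1:ℝ)).sub h1.exp
      have e : (0:ℝ) - Real.exp (-(0*b)) * (-b) = b := by simp
      rw [e] at this; exact this
    have h2 := hasDerivAt_iff_tendsto_slope.mp hd
    have h3 : Tendsto (slope (fun t : ℝ => 1 - Real.exp (-(t*b))) 0) (𝓝[>] 0) (𝓝 b) :=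
      h2.mono_left (nhdsWithin_mono 0 (fun x hx => ne_of_gt hx))
    apply Filter.Tendsto.congr' _ h3
    filter_upwards [hmem] with t ht
    rw [slope_def_field]
    norm_num
  -- G_f → qf + b‖f‖²
  have hGf : Tendsto (fun t => dl H b f t / t) (𝓝[>] (0:ℝ)) (𝓝 (qf + b * ‖f‖^2)) := by
    have h1 : Tendsto (fun t : ℝ => (inner ℝ f (f - H.P t f) : ℝ)/t
        + ((1 - Real.exp (-(t*b)))/t) * psi H f t) (𝓝[>] 0) (𝓝 (qf + b * ‖f‖^2)) :=
      hf.add (hexp.mul hpsif)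
    apply Filter.Tendsto.congr' _ h1
    filter_upwards [hmem] with t ht
    rw [hFf t]
    unfold dl pt
    field_simp
    ring
  -- antitone
  have hanti : AntitoneOn (fun t => dl H b g t / t) (Set.Ioi (0:ℝ)) := by
    intro s hs t ht hst
    rcases eq_or_lt_of_le hst with h|h
    · rw [h]
    · exact G_anti H hb g hs h
  -- comparison
  have hdl : ∀ t : ℝ, 0 < t → dl H b g t ≤ dl H b f t := by
    intro t ht
    have hpsi := psi_abs_le H f ht
    have he : (0:ℝ) < Real.exp (-(t*b)) := Real.exp_pos _
    unfold dl pt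
    rw [hnorm]
    nlinarith
  have hcomp : ∀ t : ℝ, 0 < t → dl H b g t / t ≤ dl H b f t / t := by
    intro t ht
    have := hdl t ht
    gcongr
  -- bddAbove
  have hbdd : BddAbove ((fun t => dl H b g t / t) '' Set.Ioi (0:ℝ)) := by
    have hev : ∀ᶠ t in 𝓝[>] (0:ℝ), dl H b f t / t ≤ qf + b * ‖f‖^2 + 1 :=
      Filter.Tendsto.eventually_le_const (lt_add_one _) hGf
    obtain ⟨u', hu', hsub⟩ := mem_nhdsGT_iff_exists_Ioc_subset.mp hev
    refine ⟨max (dl H b g u' / u') (qf + b * ‖f‖^2 + 1), ?_⟩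
    rintro x ⟨t, ht, rfl⟩
    rcases le_or_gt t u' with hcase|hcase
    · have hmemIoc : t ∈ Set.Ioc (0:ℝ) u' := ⟨ht, hcase⟩
      exact le_max_of_le_right (le_trans (hcomp t ht) (hsub hmemIoc))
    · exact le_max_of_le_left (hanti hu' ht hcase.le)
  -- limit of G_g
  set q' := sSup ((fun t => dl H b g t / t) '' Set.Ioi (0:ℝ)) with hq'def
  have hq't : Tendsto (fun t => dl H b g t / t) (𝓝[>] (0:ℝ)) (𝓝 q') :=
    hanti.tendsto_nhdsGT hbdd
  have hq'le : q' ≤ qf + b * ‖f‖^2 := by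
    apply le_of_tendsto_of_tendsto hq't hGf
    filter_upwards [hmem] with t ht using hcomp t ht
  -- ψ_g → ‖g‖²
  have hpsig : Tendsto (fun t => psi H g t) (𝓝[>] (0:ℝ)) (𝓝 (‖g‖^2)) := by
    have h1 : Tendsto (fun t : ℝ => t * (dl H b g t / t)) (𝓝[>] 0) (𝓝 (0 * q')) :=
      htend0.mul hq't
    rw [zero_mul] at h1
    have h2 : Tendsto (fun t => dl H b g t) (𝓝[>] 0) (𝓝 0) := by
      apply Filter.Tendsto.congr' _ h1
      filter_upwards [hmem] with t ht
      rw [mul_div_cancel₀ _ (ne_of_gt ht)]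
    have h3 : Tendsto (fun t => pt H b g t) (𝓝[>] (0:ℝ)) (𝓝 (‖g‖^2)) := by
      have h4 := tendsto_const_nhds (x := ‖g‖^2) (f := 𝓝[>] (0:ℝ)) |>.sub h2
      rw [sub_zero] at h4
      apply Filter.Tendsto.congr' _ h4
      filter_upwards with t
      unfold dl; ring
    have h4 : Tendsto (fun t : ℝ => Real.exp (t*b)) (𝓝[>] (0:ℝ)) (𝓝 1) := by
      have hc : Continuous fun t : ℝ => Real.exp (t*b) :=
        Real.continuous_exp.comp (continuous_id.mul continuous_const)
      have h := (hc.tendsto 0).mono_left (nhdsWithin_le_nhds (s := Set.Ioi (0:ℝ)))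
      simpa using h
    have h5 := h4.mul h3
    rw [one_mul] at h5
    apply Filter.Tendsto.congr' _ h5
    filter_upwards with t
    unfold pt
    rw [← mul_assoc, ← Real.exp_add]
    simp
  -- conclusion
  refine ⟨q' - b * ‖f‖^2, ?_, by linarith⟩
  have h6 : Tendsto (fun t => dl H b g t / t - ((1 - Real.exp (-(t*b)))/t) * psi H g t)
      (𝓝[>] (0:ℝ)) (𝓝 (q' - b * ‖g‖^2)) := hq't.sub (hexp.mul hpsig)
  rw [hnorm] at h6
  apply Filter.Tendsto.congr' _ h6
  filter_upwards [hmem] with t ht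
  rw [hFg t]
  unfold dl pt
  field_simp
  ring
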